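/- Let n ≥ 1 and let k₁, …, kₙ be positive integers with N = k₁ + ⋯ + kₙ. Then the number of shuffle permutations of type (k₁, …, kₙ) equals (k₁·k₂·⋯·kₙ) / ((k₁+k₂+⋯+kₙ)(k₂+⋯+kₙ)⋯kₙ) times the multinomial coefficient N!/(k₁!·k₂!·⋯·kₙ!). Equivalently, avoiding division: (card of the set of shuffle permutations of type (k₁,…,kₙ)) · (∏_{s=1}^{n} (kₛ + k_{s+1} + ⋯ + kₙ)) · (∏_{i=1}^{n} kᵢ!) = (∏_{i=1}^{n} kᵢ) · N!. -/

import Mathlib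

open Finset Nat

/-- `blockStart k s` is the 0-indexed starting position of the `s`-th block,
i.e. `k 0 + ⋯ + k (s-1)`. -/
def blockStart (k : ℕ → ℕ) (s : ℕ) : ℕ := ∑ i ∈ Finset.range s, k i


lemma blockStart_succ (k : ℕ → ℕ) (s : ℕ) : blockStart k (s+1) = blockStart k s + k s :=
  Finset.sum_range_succ k s

lemma blockStart_mono (k : ℕ → ℕ) {s t : ℕ} (h : s ≤ t) : blockStart k s ≤ blockStart k t :=
  Finset.sum_le_sum_of_subset (Finset.range_subset_range.2 h)

def bIdx (n : ℕ) (k : ℕ → ℕ) (i : ℕ) : ℕ :=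
  Nat.findGreatest (fun s => blockStart k s ≤ i) (n-1)

lemma bIdx_lt {n : ℕ} (k : ℕ → ℕ) (i : ℕ) (hn : 1 ≤ n) : bIdx n k i < n :=
  lt_of_le_of_lt (Nat.findGreatest_le _) (by omega)

lemma bIdx_le {n : ℕ} (k : ℕ → ℕ) (i : ℕ) : blockStart k (bIdx n k i) ≤ i :=
  Nat.findGreatest_spec (P := fun s => blockStart k s ≤ i) (Nat.zero_le _) (by simp [blockStart])

lemma bIdx_gt {n : ℕ} (k : ℕ → ℕ) {N i : ℕ} (hn : 1 ≤ n)
    (hN : N = ∑ i ∈ Finset.range n, k i) (hi : i < N) :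
    i < blockStart k (bIdx n k i + 1) := by
  by_cases h : bIdx n k i + 1 ≤ n - 1
  · by_contra hc
    push_neg at hc
    exact Nat.findGreatest_is_greatest (Nat.lt_succ_self _) h hc
  · have h1 : bIdx n k i ≤ n - 1 := Nat.findGreatest_le _
    have h2 : bIdx n k i + 1 = n := by omega
    have h3 : blockStart k n = N := hN.symm
    rw [h2, h3]
    exact hi

lemma bIdx_eq {n : ℕ} (k : ℕ → ℕ) {N i s : ℕ} (hn : 1 ≤ n)
    (hN : N = ∑ i ∈ Finset.range n, k i) (hi : i < N) (hs : s < n)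
    (h1 : blockStart k s ≤ i) (h2 : i < blockStart k (s+1)) : bIdx n k i = s := by
  have l1 := bIdx_le (n := n) k i
  have l2 := bIdx_gt k hn hN hi
  rcases lt_trichotomy (bIdx n k i) s with h | h | h
  · have : blockStart k (bIdx n k i + 1) ≤ blockStart k s := blockStart_mono k (by omega)
    omega
  · exact h
  · have : blockStart k (s+1) ≤ blockStart k (bIdx n k i) := blockStart_mono k (by omega)
    omega

lemma blockStart_lt {n : ℕ} (k : ℕ → ℕ) {N s : ℕ} (hk : ∀ i < n, 0 < k i)
    (hN : N = ∑ i ∈ Finset.range n, k i) (hs : s < n) : blockStart k (s+1) ≤ N ∧ blockStart k s < N := by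
  have h1 : blockStart k (s+1) ≤ blockStart k n := blockStart_mono k (by omega)
  have h2 : blockStart k n = N := hN.symm
  have h3 := blockStart_succ k s
  have := hk s hs
  omega

def GoodPart {α : Type} [LinearOrder α] {n : ℕ} (k : ℕ → ℕ) (A : Fin n → Finset α) : Prop :=
  (∀ s : Fin n, (A s).card = k (s : ℕ)) ∧
  (∀ x : α, ∃! s : Fin n, x ∈ A s) ∧
  (∀ s t : Fin n, s < t → ∀ y ∈ A t, ∃ x ∈ A s, x < y)

lemma card_blockFilter {n : ℕ} (k : ℕ → ℕ) {N s : ℕ} (hk : ∀ i < n, 0 < k i)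
    (hN : N = ∑ i ∈ Finset.range n, k i) (hs : s < n) :
    (Finset.univ.filter fun i : Fin N =>
      blockStart k s ≤ (i : ℕ) ∧ (i : ℕ) < blockStart k (s+1)).card = k s := by
  have hb := (blockStart_lt k hk hN hs).1
  have : (Finset.univ.filter fun i : Fin N =>
      blockStart k s ≤ (i : ℕ) ∧ (i : ℕ) < blockStart k (s+1))
      = (Finset.Ico (blockStart k s) (blockStart k (s+1))).attachFin
        (fun m hm => lt_of_lt_of_le (Finset.mem_Ico.1 hm).2 hb) := by
    ext a
    simp [Finset.mem_attachFin, Finset.mem_Ico]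
  rw [this, Finset.card_attachFin, Nat.card_Ico, blockStart_succ]
  omega

/-- `σ` is a shuffle permutation of type `(k 0, …, k (n-1))`: it is strictly
increasing on each consecutive block, and the images of the first elements of
the blocks increase with the block index. -/
def IsShuffle (n : ℕ) (k : ℕ → ℕ) {N : ℕ} (σ : Equiv.Perm (Fin N)) : Prop :=
  (∀ s < n, ∀ i j : Fin N,
    blockStart k s ≤ (i : ℕ) → (j : ℕ) < blockStart k (s + 1) → i < j → σ i < σ j) ∧
  (∀ t < n, ∀ s < t, ∀ i j : Fin N,
    (i : ℕ) = blockStart k s → (j : ℕ) = blockStart k t → σ i < σ j)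


theorem card_shuffle_eq {n : ℕ} (hn : 1 ≤ n) (k : ℕ → ℕ) (hk : ∀ i < n, 0 < k i)
    {N : ℕ} (hN : N = ∑ i ∈ Finset.range n, k i) :
    Nat.card {σ : Equiv.Perm (Fin N) // IsShuffle n k σ}
      = Nat.card {A : Fin n → Finset (Fin N) // GoodPart k A} := by
  classical
  set bF : ℕ → Finset (Fin N) := fun s => Finset.univ.filter fun i =>
    blockStart k s ≤ (i : ℕ) ∧ (i : ℕ) < blockStart k (s+1) with hbF
  have memF : ∀ (s : ℕ) (i : Fin N),
      i ∈ bF s ↔ (blockStart k s ≤ (i : ℕ) ∧ (i : ℕ) < blockStart k (s+1)) := by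
    intro s i; simp [hbF]
  have cardF : ∀ s < n, (bF s).card = k s := fun s hs => card_blockFilter k hk hN hs
  have hmemIdx : ∀ (s : ℕ), s < n → ∀ i : Fin N, i ∈ bF s → bIdx n k (i : ℕ) = s := by
    intro s hs i hi
    exact bIdx_eq k hn hN i.2 hs ((memF s i).1 hi).1 ((memF s i).1 hi).2
  have hstart_mem : ∀ (s : ℕ), s < n →
      ∀ i : Fin N, (i : ℕ) = blockStart k s → i ∈ bF s := by
    intro s hs i hi
    refine (memF s i).2 ⟨le_of_eq hi.symm, ?_⟩
    have := blockStart_succ k s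
    have := hk s hs
    omega
  -- forward map is good
  have hgood : ∀ (σ : Equiv.Perm (Fin N)), IsShuffle n k σ →
      GoodPart k (fun s : Fin n => (bF (s : ℕ)).image σ) := by
    intro σ hσ
    refine ⟨?_, ?_, ?_⟩
    · intro s
      rw [Finset.card_image_of_injective _ σ.injective, cardF _ s.2]
    · intro x
      refine ⟨⟨bIdx n k ((σ.symm x : Fin N) : ℕ), bIdx_lt k _ hn⟩, ?_, ?_⟩
      · refine Finset.mem_image.2 ⟨σ.symm x, ?_, by simp⟩
        exact (memF _ _).2 ⟨bIdx_le k _, bIdx_gt k hn hN (σ.symm x).2⟩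
      · rintro t ht
        obtain ⟨i, hi, hix⟩ := Finset.mem_image.1 ht
        have : σ.symm x = i := by rw [← hix]; simp
        apply Fin.ext
        simpa [this] using (hmemIdx (t : ℕ) t.2 i hi).symm
    · rintro s t hst y hy
      obtain ⟨j, hj, rfl⟩ := Finset.mem_image.1 hy
      have hsN : blockStart k (s : ℕ) < N := (blockStart_lt k hk hN s.2).2
      have htN : blockStart k (t : ℕ) < N := (blockStart_lt k hk hN t.2).2
      set i0 : Fin N := ⟨blockStart k (s : ℕ), hsN⟩
      set j0 : Fin N := ⟨blockStart k (t : ℕ), htN⟩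
      have h2 : σ i0 < σ j0 := hσ.2 (t : ℕ) t.2 (s : ℕ) hst i0 j0 rfl rfl
      refine ⟨σ i0, Finset.mem_image_of_mem _ (hstart_mem _ s.2 i0 rfl), ?_⟩
      rcases eq_or_lt_of_le (((memF _ j).1 hj).1 : blockStart k (t:ℕ) ≤ (j:ℕ)) with h | h
      · have : j0 = j := Fin.ext h
        rw [← this]; exact h2
      · exact lt_trans h2 (hσ.1 (t : ℕ) t.2 j0 j (le_refl _) ((memF _ j).1 hj).2 h)
  apply Nat.card_eq_of_bijective
    (fun p : {σ : Equiv.Perm (Fin N) // IsShuffle n k σ} =>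
      (⟨fun s : Fin n => (bF (s : ℕ)).image p.1, hgood p.1 p.2⟩ :
        {A : Fin n → Finset (Fin N) // GoodPart k A}))
  constructor
  · -- injective
    rintro ⟨σ, hσ⟩ ⟨τ, hτ⟩ h
    simp only [Subtype.mk.injEq] at h ⊢
    apply Equiv.ext
    intro i
    set s := bIdx n k (i : ℕ) with hsdef
    have hs : s < n := bIdx_lt k _ hn
    have hbs1 : blockStart k s ≤ (i : ℕ) := bIdx_le k _
    have hbs2 : (i : ℕ) < blockStart k (s+1) := bIdx_gt k hn hN i.2
    have hsucc := blockStart_succ k s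
    have hlt : ∀ j : Fin (k s), blockStart k s + (j : ℕ) < N := by
      intro j
      have := (blockStart_lt k hk hN hs).1
      omega
    have hblk : ∀ j : Fin (k s), (⟨blockStart k s + (j : ℕ), hlt j⟩ : Fin N) ∈ bF s := by
      intro j
      have := j.2
      refine (memF _ _).2 ⟨?_, ?_⟩ <;> simp only [Fin.val_mk] <;> omega
    set S : Finset (Fin N) := (bF s).image σ with hS
    have hScard : S.card = k s := by
      rw [hS, Finset.card_image_of_injective _ σ.injective, cardF _ hs]
    have hSτ : (bF s).image τ = S := by
      have := congrFun h ⟨s, hs⟩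
      exact this.symm
    have emono : ∀ (ρ : Equiv.Perm (Fin N)), IsShuffle n k ρ →
        StrictMono (fun j : Fin (k s) => ρ ⟨blockStart k s + (j : ℕ), hlt j⟩) := by
      intro ρ hρ j j' hjj
      have hj2 := j'.2
      have hjj' : (j : ℕ) < (j' : ℕ) := hjj
      exact hρ.1 s hs _ _ (by simp only [Fin.val_mk]; omega)
        (by simp only [Fin.val_mk]; omega)
        (by simp only [Fin.lt_def, Fin.val_mk]; omega)
    have h1 : (fun j : Fin (k s) => σ ⟨blockStart k s + (j : ℕ), hlt j⟩)
        = S.orderEmbOfFin hScard :=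
      Finset.orderEmbOfFin_unique hScard
        (fun j => Finset.mem_image_of_mem _ (hblk j)) (emono σ hσ)
    have h2 : (fun j : Fin (k s) => τ ⟨blockStart k s + (j : ℕ), hlt j⟩)
        = S.orderEmbOfFin hScard :=
      Finset.orderEmbOfFin_unique hScard
        (fun j => hSτ ▸ Finset.mem_image_of_mem _ (hblk j)) (emono τ hτ)
    have hieq : i = (⟨blockStart k s + ((⟨(i : ℕ) - blockStart k s, by omega⟩ : Fin (k s)) : ℕ), hlt _⟩ : Fin N) := by
      apply Fin.ext; simp; omega
    calc σ i = σ ⟨blockStart k s + ((⟨(i : ℕ) - blockStart k s, by omega⟩ : Fin (k s)) : ℕ), hlt _⟩ := by rw [← hieq]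
    _ = S.orderEmbOfFin hScard ⟨(i : ℕ) - blockStart k s, by omega⟩ := congrFun h1 _
    _ = τ ⟨blockStart k s + ((⟨(i : ℕ) - blockStart k s, by omega⟩ : Fin (k s)) : ℕ), hlt _⟩ := (congrFun h2 _).symm
    _ = τ i := by rw [← hieq]
  · -- surjective
    rintro ⟨A, hA⟩
    have hsub : ∀ i : Fin N, (i:ℕ) - blockStart k (bIdx n k (i:ℕ)) < k (bIdx n k (i:ℕ)) := by
      intro i
      have h1 := bIdx_le (n := n) k (i:ℕ)
      have h2 := bIdx_gt k hn hN i.2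
      have h3 := blockStart_succ k (bIdx n k (i:ℕ))
      omega
    set f : Fin N → Fin N := fun i =>
      (A ⟨bIdx n k (i:ℕ), bIdx_lt k (i:ℕ) hn⟩).orderEmbOfFin (hA.1 _)
        ⟨(i:ℕ) - blockStart k (bIdx n k (i:ℕ)), hsub i⟩ with hf
    have key : ∀ (s : ℕ) (hs : s < n) (i : Fin N) (hb : bIdx n k (i:ℕ) = s)
        (hx : (i:ℕ) - blockStart k s < k s),
        f i = (A ⟨s, hs⟩).orderEmbOfFin (hA.1 ⟨s, hs⟩) ⟨(i:ℕ) - blockStart k s, hx⟩ := by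
      intro s hs i hb hx
      subst hb
      rfl
    have hfmem : ∀ (s : ℕ) (hs : s < n) (i : Fin N), bIdx n k (i:ℕ) = s →
        f i ∈ A ⟨s, hs⟩ := by
      intro s hs i hb
      have hx : (i:ℕ) - blockStart k s < k s := hb ▸ hsub i
      rw [key s hs i hb hx]
      exact Finset.orderEmbOfFin_mem _ _ _
    have hinj : Function.Injective f := by
      intro i i' he
      have m1 : f i ∈ A ⟨bIdx n k (i:ℕ), bIdx_lt k (i:ℕ) hn⟩ := hfmem _ _ i rfl
      have m2 : f i' ∈ A ⟨bIdx n k (i':ℕ), bIdx_lt k (i':ℕ) hn⟩ := hfmem _ _ i' rfl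
      rw [he] at m1
      obtain ⟨u, _, huniq⟩ := hA.2.1 (f i')
      have hbb := (huniq _ m1).trans (huniq _ m2).symm
      have hb : bIdx n k (i:ℕ) = bIdx n k (i':ℕ) := congrArg Fin.val hbb
      set s := bIdx n k (i:ℕ) with hsdef
      have hs : s < n := bIdx_lt k _ hn
      have hxi : (i:ℕ) - blockStart k s < k s := hsub i
      have hxi' : (i':ℕ) - blockStart k s < k s := by rw [hb]; exact hsub i'
      rw [key s hs i rfl hxi, key s hs i' hb.symm hxi'] at he
      have := ((A ⟨s, hs⟩).orderEmbOfFin (hA.1 ⟨s, hs⟩)).injective he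
      have hval : (i:ℕ) - blockStart k s = (i':ℕ) - blockStart k s := by
        simpa [Fin.mk.injEq] using this
      have l1 : blockStart k s ≤ (i:ℕ) := bIdx_le k _
      have l2 : blockStart k s ≤ (i':ℕ) := by rw [hb]; exact bIdx_le k _
      apply Fin.ext; omega
    let σ : Equiv.Perm (Fin N) := Equiv.ofBijective f (Finite.injective_iff_bijective.1 hinj)
    have hσapp : ∀ i, σ i = f i := fun i => rfl
    have hmono : ∀ (s : ℕ), s < n → ∀ i j : Fin N, blockStart k s ≤ (i:ℕ) →
        (j:ℕ) < blockStart k (s+1) → i < j → f i < f j := by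
      intro s hs i j h1 h2 hij
      have hij' : (i:ℕ) < (j:ℕ) := hij
      have hsucc := blockStart_succ k s
      have hbi : bIdx n k (i:ℕ) = s := bIdx_eq k hn hN i.2 hs h1 (by omega)
      have hbj : bIdx n k (j:ℕ) = s := bIdx_eq k hn hN j.2 hs (by omega) h2
      rw [key s hs i hbi (by omega), key s hs j hbj (by omega)]
      exact ((A ⟨s, hs⟩).orderEmbOfFin (hA.1 ⟨s, hs⟩)).strictMono (by simp [Fin.lt_def]; omega)
    have hmin : ∀ (s : ℕ) (hs : s < n) (i : Fin N), (i:ℕ) = blockStart k s →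
        ∀ x ∈ A ⟨s, hs⟩, f i ≤ x := by
      intro s hs i hi x hx
      have hks := hk s hs
      have hsucc := blockStart_succ k s
      have hbi : bIdx n k (i:ℕ) = s := bIdx_eq k hn hN i.2 hs (by omega) (by omega)
      have hx0 : (i:ℕ) - blockStart k s < k s := by omega
      rw [key s hs i hbi hx0]
      have hrange : x ∈ Set.range ((A ⟨s, hs⟩).orderEmbOfFin (hA.1 ⟨s, hs⟩)) := by
        rw [Finset.range_orderEmbOfFin]; exact hx
      obtain ⟨j, rfl⟩ := hrange
      exact ((A ⟨s, hs⟩).orderEmbOfFin (hA.1 ⟨s, hs⟩)).monotone (by simp [Fin.le_def]; omega)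
    have hshuffle : IsShuffle n k σ := by
      constructor
      · intro s hs i j h1 h2 hij
        exact hmono s hs i j h1 h2 hij
      · intro t ht s hst i j hi hj
        have hkt := hk t ht
        have hsucct := blockStart_succ k t
        have hbj : bIdx n k (j:ℕ) = t := bIdx_eq k hn hN j.2 ht (le_of_eq hj.symm) (by omega)
        obtain ⟨x, hxA, hxlt⟩ := hA.2.2 ⟨s, lt_trans hst ht⟩ ⟨t, ht⟩
          (show (⟨s, lt_trans hst ht⟩ : Fin n) < ⟨t, ht⟩ from hst) (f j) (hfmem t ht j hbj)
        exact lt_of_le_of_lt (hmin s (lt_trans hst ht) i hi x hxA) hxlt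
    refine ⟨⟨σ, hshuffle⟩, ?_⟩
    apply Subtype.ext
    funext s
    apply Finset.eq_of_subset_of_card_le
    · intro x hx
      obtain ⟨i, hi, rfl⟩ := Finset.mem_image.1 hx
      have hmem := (memF _ i).1 hi
      have hb : bIdx n k (i:ℕ) = (s:ℕ) := bIdx_eq k hn hN i.2 s.2 hmem.1 hmem.2
      have := hfmem (s:ℕ) s.2 i hb
      simpa [hσapp] using this
    · rw [hA.1 s, Finset.card_image_of_injective _ σ.injective, cardF _ s.2]

theorem part_count (n : ℕ) : ∀ (k : ℕ → ℕ) (α : Type) [Fintype α] [LinearOrder α],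
    (∀ i < n, 0 < k i) → Fintype.card α = ∑ i ∈ Finset.range n, k i →
    Nat.card {A : Fin n → Finset α // GoodPart k A}
      * (∏ s ∈ Finset.range n, ∑ i ∈ Finset.Ico s n, k i)
      * (∏ i ∈ Finset.range n, (k i)!)
    = (∏ i ∈ Finset.range n, k i) * (Fintype.card α)! := by
  induction n with
  | zero =>
    intro k α _ _ hk hcard
    have hα : IsEmpty α := Fintype.card_eq_zero_iff.1 (by simpa using hcard)
    have h1 : Nat.card {A : Fin 0 → Finset α // GoodPart k A} = 1 := by
      rw [Nat.card_eq_one_iff_unique]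
      refine ⟨⟨?_⟩, ?_⟩
      · rintro ⟨A, _⟩ ⟨B, _⟩
        apply Subtype.ext; funext s; exact s.elim0
      · exact ⟨⟨fun s => s.elim0,
          ⟨fun s => s.elim0, fun x => (hα.false x).elim, fun s => s.elim0⟩⟩⟩
    simp [h1, hcard]
  | succ n ih =>
    intro k α _ _ hk hcard
    classical
    set N := Fintype.card α with hNdef
    have hN : N = ∑ i ∈ Finset.range (n+1), k i := hcard
    have hk0 : 0 < k 0 := hk 0 (by omega)
    have hk0N : k 0 ≤ N := by
      rw [hN]
      exact Finset.single_le_sum (f := k) (fun i _ => Nat.zero_le _) (by simp)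
    have hNpos : 0 < N := lt_of_lt_of_le hk0 hk0N
    haveI hne : Nonempty α := Fintype.card_pos_iff.1 hNpos
    set m : α := Finset.univ.min' Finset.univ_nonempty with hm
    have hmle : ∀ x : α, m ≤ x := fun x => Finset.min'_le _ _ (Finset.mem_univ x)
    set GoodB : Finset α → Prop := fun B => B.card = k 0 ∧ m ∈ B with hGoodB
    have hsum' : N - k 0 = ∑ i ∈ Finset.range n, k (i+1) := by
      have := Finset.sum_range_succ' k n
      omega
    set T := {A : Fin (n+1) → Finset α // GoodPart k A} with hT
    -- decomposition over the first block
    letI : Fintype T := Fintype.ofFinite T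
    letI : ∀ B : Finset α, Fintype {x : T // x.1 0 = B} := fun B => Fintype.ofFinite _
    have hdec : Nat.card T = ∑ B : Finset α, Nat.card {x : T // x.1 0 = B} := by
      rw [Nat.card_eq_fintype_card,
        ← Fintype.card_congr (Equiv.sigmaFiberEquiv (fun x : T => x.1 0)),
        Fintype.card_sigma]
      simp [Nat.card_eq_fintype_card]
    have hfiber_empty : ∀ B : Finset α, ¬ GoodB B → Nat.card {x : T // x.1 0 = B} = 0 := by
      intro B hB
      rw [Nat.card_eq_zero]
      left
      constructor
      rintro ⟨⟨A, hA⟩, h0⟩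
      have h0' : A 0 = B := h0
      apply hB
      have hc0 : B.card = k 0 := by rw [← h0']; exact hA.1 0
      refine ⟨hc0, ?_⟩
      obtain ⟨s, hsmem, _⟩ := hA.2.1 m
      rcases Fin.eq_zero_or_eq_succ s with rfl | ⟨v, rfl⟩
      · rwa [h0'] at hsmem
      · obtain ⟨x, _, hxlt⟩ := hA.2.2 0 v.succ (Fin.succ_pos v) m hsmem
        exact absurd hxlt (not_lt.2 (hmle x))
    -- the main bijection for good B
    have hfiber : ∀ B : Finset α, GoodB B →
        Nat.card {A' : Fin n → Finset {y : α // y ∈ Bᶜ} // GoodPart (fun i => k (i+1)) A'}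
          = Nat.card {x : T // x.1 0 = B} := by
      intro B hB
      have hcons : ∀ (A' : Fin n → Finset {y : α // y ∈ Bᶜ}),
          GoodPart (fun i => k (i+1)) A' →
          GoodPart k (Fin.cons B (fun s =>
            (A' s).map (Function.Embedding.subtype (fun y : α => y ∈ Bᶜ)))) := by
        intro A' hA'
        refine ⟨?_, ?_, ?_⟩
        · intro s
          refine Fin.cases ?_ ?_ s
          · simpa using hB.1
          · intro t
            simpa using hA'.1 t
        · intro x
          by_cases hx : x ∈ B
          · refine ⟨0, by simpa using hx, ?_⟩
            intro t ht
            rcases Fin.eq_zero_or_eq_succ t with rfl | ⟨v, rfl⟩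
            · rfl
            · rw [Fin.cons_succ] at ht
              obtain ⟨y, _, hyx⟩ := Finset.mem_map.1 ht
              have : (y : α) ∈ Bᶜ := y.2
              rw [show ((Function.Embedding.subtype _) y : α) = (y : α) from rfl] at hyx
              rw [hyx] at this
              exact absurd hx (Finset.mem_compl.1 this)
          · have hxc : x ∈ Bᶜ := Finset.mem_compl.2 hx
            obtain ⟨t, htmem, huniq⟩ := hA'.2.1 ⟨x, hxc⟩
            refine ⟨t.succ, ?_, ?_⟩
            · simp only [Fin.cons_succ]
              exact Finset.mem_map.2 ⟨⟨x, hxc⟩, htmem, rfl⟩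
            · intro u hu
              rcases Fin.eq_zero_or_eq_succ u with rfl | ⟨v, rfl⟩
              · rw [Fin.cons_zero] at hu
                exact absurd hu hx
              · rw [Fin.cons_succ] at hu
                obtain ⟨y, hy, hyx⟩ := Finset.mem_map.1 hu
                have hyx' : (y : α) = x := hyx
                have : y = ⟨x, hxc⟩ := Subtype.ext hyx'
                rw [this] at hy
                exact congrArg Fin.succ (huniq v hy)
        · intro s t hst y hy
          rcases Fin.eq_zero_or_eq_succ t with rfl | ⟨t', rfl⟩
          · exact absurd hst (by simp)
          · rw [Fin.cons_succ] at hy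
            obtain ⟨y', hy', rfl⟩ := Finset.mem_map.1 hy
            rcases Fin.eq_zero_or_eq_succ s with rfl | ⟨s', rfl⟩
            · refine ⟨m, by simpa using hB.2, ?_⟩
              refine lt_of_le_of_ne (hmle _) ?_
              intro he
              have h2 := y'.2
              rw [show ((Function.Embedding.subtype _) y' : α) = (y' : α) from rfl] at he
              rw [← he] at h2
              exact (Finset.mem_compl.1 h2) hB.2
            · have hst' : s' < t' := by
                rwa [Fin.succ_lt_succ_iff] at hst
              obtain ⟨x, hxA, hxlt⟩ := hA'.2.2 s' t' hst' y' hy'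
              refine ⟨(x : α), ?_, ?_⟩
              · simp only [Fin.cons_succ]
                exact Finset.mem_map.2 ⟨x, hxA, rfl⟩
              · exact_mod_cast hxlt
      apply Nat.card_eq_of_bijective (fun p => ⟨⟨Fin.cons B (fun s =>
          (p.1 s).map (Function.Embedding.subtype (fun y : α => y ∈ Bᶜ))),
          hcons p.1 p.2⟩, by simp⟩)
      constructor
      · intro p q h
        apply Subtype.ext; funext s
        have h2 := congrArg Subtype.val (congrArg Subtype.val h)
        have h3 := congrFun h2 s.succ
        simp only [Fin.cons_succ] at h3
        exact Finset.map_injective _ h3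
      · rintro ⟨⟨A, hA⟩, h0⟩
        have h0' : A 0 = B := h0
        have hdisj : ∀ (t : Fin n) (x : α), x ∈ A t.succ → x ∈ Bᶜ := by
          intro t x hx
          rw [Finset.mem_compl]
          intro hxB
          obtain ⟨u, _, huniq⟩ := hA.2.1 x
          have e1 := huniq _ hx
          have e2 := huniq 0 (show x ∈ A 0 by rwa [h0'])
          exact Fin.succ_ne_zero t (e1.trans e2.symm)
        have hmap : ∀ t : Fin n,
            ((A t.succ).subtype (fun y => y ∈ Bᶜ)).map
              (Function.Embedding.subtype (fun y : α => y ∈ Bᶜ)) = A t.succ := by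
          intro t
          rw [Finset.subtype_map, Finset.filter_true_of_mem (fun x hx => hdisj t x hx)]
        have good' : GoodPart (fun i => k (i+1))
            (fun s : Fin n => (A s.succ).subtype (fun y => y ∈ Bᶜ)) := by
          refine ⟨?_, ?_, ?_⟩
          · intro t
            have : (((A t.succ).subtype (fun y => y ∈ Bᶜ)).map
                (Function.Embedding.subtype (fun y : α => y ∈ Bᶜ))).card
                = (A t.succ).card := by rw [hmap]
            rw [Finset.card_map] at this
            rw [this, hA.1 t.succ]
            simp
          · rintro ⟨x, hxc⟩
            obtain ⟨u, hu, huniq⟩ := hA.2.1 x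
            rcases Fin.eq_zero_or_eq_succ u with rfl | ⟨v, rfl⟩
            · rw [h0'] at hu
              exact absurd hu (Finset.mem_compl.1 hxc)
            · refine ⟨v, Finset.mem_subtype.2 hu, ?_⟩
              intro w hw
              have := huniq w.succ (Finset.mem_subtype.1 hw)
              exact Fin.succ_injective _ this
          · intro s t hst y hy
            obtain ⟨x, hxA, hxlt⟩ := hA.2.2 s.succ t.succ
              (Fin.succ_lt_succ_iff.2 hst) (y : α) (Finset.mem_subtype.1 hy)
            exact ⟨⟨x, hdisj s x hxA⟩, Finset.mem_subtype.2 hxA, by exact_mod_cast hxlt⟩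
        refine ⟨⟨fun s : Fin n => (A s.succ).subtype (fun y => y ∈ Bᶜ), good'⟩, ?_⟩
        apply Subtype.ext
        apply Subtype.ext
        funext s
        refine Fin.cases ?_ ?_ s
        · simpa using h0'.symm
        · intro t
          simpa using hmap t
    -- arithmetic assembly
    have hk' : ∀ i < n, 0 < k (i+1) := fun i hi => hk (i+1) (by omega)
    have hcount : (Finset.univ.filter GoodB).card = Nat.choose (N-1) (k 0 - 1) := by
      have hcard_erase : (Finset.univ.erase m).card = N - 1 := by
        rw [Finset.card_erase_of_mem (Finset.mem_univ m), Finset.card_univ]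
      rw [show Nat.choose (N-1) (k 0 - 1)
          = (Finset.powersetCard (k 0 - 1) (Finset.univ.erase m)).card from by
        rw [Finset.card_powersetCard, hcard_erase]]
      apply Finset.card_nbij' (fun B => B.erase m) (fun C => insert m C)
      · intro B hBmem
        rw [Finset.mem_coe, Finset.mem_filter] at hBmem
        simp only [Finset.mem_coe, Finset.mem_powersetCard]
        exact ⟨Finset.erase_subset_erase m (Finset.subset_univ B),
          by rw [Finset.card_erase_of_mem hBmem.2.2, hBmem.2.1]⟩
      · intro C hC
        rw [Finset.mem_coe, Finset.mem_powersetCard] at hC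
        have hmC : m ∉ C := fun h => (Finset.mem_erase.1 (hC.1 h)).1 rfl
        simp only [Finset.mem_coe, Finset.mem_filter]
        refine ⟨Finset.mem_univ _, ?_, Finset.mem_insert_self _ _⟩
        rw [Finset.card_insert_of_notMem hmC, hC.2]
        omega
      · intro B hBmem
        rw [Finset.mem_coe, Finset.mem_filter] at hBmem
        exact Finset.insert_erase hBmem.2.2
      · intro C hC
        rw [Finset.mem_coe, Finset.mem_powersetCard] at hC
        exact Finset.erase_insert (fun h => (Finset.mem_erase.1 (hC.1 h)).1 rfl)
    set c1 := ∏ s ∈ Finset.range n, ∑ i ∈ Finset.Ico s n, k (i+1) with hc1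
    set c2 := ∏ i ∈ Finset.range n, (k (i+1))! with hc2
    set c3 := ∏ i ∈ Finset.range n, k (i+1) with hc3
    have hIH : ∀ B : Finset α, GoodB B →
        Nat.card {x : T // x.1 0 = B} * c1 * c2 = c3 * (N - k 0)! := by
      intro B hB
      rw [← hfiber B hB]
      have hcardB : Fintype.card {y : α // y ∈ Bᶜ} = ∑ i ∈ Finset.range n, k (i+1) := by
        rw [show Fintype.card {y : α // y ∈ Bᶜ} = (Bᶜ : Finset α).card from
          Fintype.card_coe _]
        rw [Finset.card_compl, hB.1]
        exact hsum'
      have h := ih (fun i => k (i+1)) {y : α // y ∈ Bᶜ} hk' hcardB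
      rw [hcardB, ← hsum'] at h
      simpa only [] using h
    have hsum_main : Nat.card T * c1 * c2
        = (Finset.univ.filter GoodB).card * (c3 * (N - k 0)!) := by
      rw [hdec, Finset.sum_mul, Finset.sum_mul]
      have hterm : ∀ B ∈ (Finset.univ : Finset (Finset α)),
          Nat.card {x : T // x.1 0 = B} * c1 * c2
            = if GoodB B then c3 * (N - k 0)! else 0 := by
        intro B _
        by_cases hB : GoodB B
        · rw [if_pos hB]; exact hIH B hB
        · rw [if_neg hB, hfiber_empty B hB, zero_mul, zero_mul]
      rw [Finset.sum_congr rfl hterm, Finset.sum_ite, Finset.sum_const_zero, add_zero,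
        Finset.sum_const, smul_eq_mul]
    have e1 : (∏ s ∈ Finset.range (n+1), ∑ i ∈ Finset.Ico s (n+1), k i) = c1 * N := by
      rw [Finset.prod_range_succ' (fun s => ∑ i ∈ Finset.Ico s (n+1), k i) n]
      congr 1
      · rw [hc1]
        apply Finset.prod_congr rfl
        intro s _
        rw [Finset.sum_Ico_eq_sum_range, Finset.sum_Ico_eq_sum_range]
        rw [show n + 1 - (s+1) = n - s from by omega]
        apply Finset.sum_congr rfl
        intro i _
        congr 1
        omega
      · rw [← Finset.range_eq_Ico]
        exact hN.symm
    have e2 : (∏ i ∈ Finset.range (n+1), (k i)!) = (k 0)! * c2 := by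
      rw [Finset.prod_range_succ' (fun i => (k i)!) n, mul_comm]
    have e3 : (∏ i ∈ Finset.range (n+1), k i) = k 0 * c3 := by
      rw [Finset.prod_range_succ' k n, mul_comm]
    rw [e1, e2, e3]
    have hchoose : Nat.choose (N-1) (k 0 - 1) * (k 0 - 1)! * (N - k 0)! = (N-1)! := by
      have h := Nat.choose_mul_factorial_mul_factorial (show k 0 - 1 ≤ N - 1 by omega)
      rwa [show N - 1 - (k 0 - 1) = N - k 0 from by omega] at h
    have hfac1 : k 0 * (k 0 - 1)! = (k 0)! := Nat.mul_factorial_pred hk0.ne'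
    have hfac2 : N * (N - 1)! = N ! := Nat.mul_factorial_pred hNpos.ne'
    calc Nat.card T * (c1 * N) * ((k 0)! * c2)
        = (Nat.card T * c1 * c2) * (N * (k 0)!) := by ring
      _ = ((Finset.univ.filter GoodB).card * (c3 * (N - k 0)!)) * (N * (k 0)!) := by
          rw [hsum_main]
      _ = (Nat.choose (N-1) (k 0 - 1) * (c3 * (N - k 0)!)) * (N * (k 0)!) := by rw [hcount]
      _ = (Nat.choose (N-1) (k 0 - 1) * (k 0 - 1)! * (N - k 0)!) * (k 0 * N * c3) := by
          rw [← hfac1]; ring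
      _ = (N-1)! * (k 0 * N * c3) := by rw [hchoose]
      _ = (k 0 * c3) * (N * (N-1)!) := by ring
      _ = (k 0 * c3) * N ! := by rw [hfac2]

/-- The number of shuffle permutations of type `(k₁, …, kₙ)` satisfies
`card · ∏ₛ (kₛ + ⋯ + kₙ) · ∏ᵢ kᵢ! = (∏ᵢ kᵢ) · N!`. -/
theorem shuffle_count (n : ℕ) (hn : 1 ≤ n) (k : ℕ → ℕ) (hk : ∀ i < n, 0 < k i)
    (N : ℕ) (hN : N = ∑ i ∈ Finset.range n, k i) :
    Nat.card {σ : Equiv.Perm (Fin N) // IsShuffle n k σ}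
      * (∏ s ∈ Finset.range n, ∑ i ∈ Finset.Ico s n, k i)
      * (∏ i ∈ Finset.range n, (k i)!)
    = (∏ i ∈ Finset.range n, k i) * N ! := by
  rw [card_shuffle_eq hn k hk hN]
  have h := part_count n k (Fin N) hk (by rw [Fintype.card_fin]; exact hN)
  rwa [Fintype.card_fin] at h
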